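/- Let (s_k) be a complex sequence that is slowly oscillating with respect to (L,1) summability: for every ε > 0 there exist n₀ > 1 and λ > 1 such that |s_k − s_n| ≤ ε whenever n₀ ≤ n < k ≤ n^λ. If (1/ℓ_n) Σ_{k=1}^n s_k/k → A as n → ∞, where ℓ_n := Σ_{k=1}^n 1/k, then s_n → A. -/

import Mathlib

open Filter

private lemma ell_eq (n : ℕ) :
    (∑ k ∈ Finset.Icc 1 n, (1:ℝ) / k) = ((harmonic n : ℚ) : ℝ) := by
  rw [harmonic_eq_sum_Icc]
  push_cast
  simp [one_div]

private lemma ell_lower (n : ℕ) :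
    Real.log ((n : ℝ) + 1) ≤ ∑ k ∈ Finset.Icc 1 n, (1:ℝ) / k := by
  rw [ell_eq]
  have := log_add_one_le_harmonic n
  push_cast at this
  exact this

private lemma ell_upper (n : ℕ) :
    (∑ k ∈ Finset.Icc 1 n, (1:ℝ) / k) ≤ 1 + Real.log n := by
  rw [ell_eq]
  exact harmonic_le_one_add_log n

set_option maxHeartbeats 2000000 in
private theorem corollary4_aux
    (s : ℕ → ℂ) (A : ℂ) (L : ℕ → ℝ) (T : ℕ → ℂ)
    (hLdef : ∀ n, L n = ∑ k ∈ Finset.Icc 1 n, (1:ℝ) / k)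
    (hTdef : ∀ n, T n = ((L n : ℝ) : ℂ)⁻¹ * ∑ k ∈ Finset.Icc 1 n, s k / (k : ℂ))
    (hso : ∀ ε > (0:ℝ), ∃ n₀ : ℕ, 1 < n₀ ∧ ∃ l > (1:ℝ),
      ∀ n k : ℕ, n₀ ≤ n → n < k → (k : ℝ) ≤ (n : ℝ) ^ l → ‖s k - s n‖ ≤ ε)
    (hT : Tendsto T atTop (nhds A)) :
    Tendsto s atTop (nhds A) := by
  rw [Metric.tendsto_atTop] at hT ⊢
  intro ε hε
  obtain ⟨n₀, hn₀, l, hl, hosc⟩ := hso (ε/4) (by positivity)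
  have hl1 : (0:ℝ) < l - 1 := by linarith
  have hlpos : (0:ℝ) < l := by linarith
  set δ := ε * (l - 1) / (32 * l) with hδdef
  have hδ : 0 < δ := div_pos (mul_pos hε hl1) (by linarith)
  obtain ⟨N₁, hN₁⟩ := hT δ hδ
  set B := Real.exp (max 1 (2 / (l - 1))) with hBdef
  refine ⟨max (max n₀ N₁) (⌈B⌉₊ + 1), fun n hn => ?_⟩
  have hn0 : n₀ ≤ n := le_trans (le_trans (le_max_left _ _) (le_max_left _ _)) hn
  have hnN1 : N₁ ≤ n := le_trans (le_trans (le_max_right _ _) (le_max_left _ _)) hn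
  have hnB' : (⌈B⌉₊ + 1 : ℕ) ≤ n := le_trans (le_max_right _ _) hn
  have hn1 : 1 ≤ n := le_trans (le_of_lt hn₀) hn0
  have hnpos : (0:ℝ) < n := by exact_mod_cast Nat.lt_of_lt_of_le Nat.zero_lt_one hn1
  have hnB : B < (n : ℝ) := by
    have h1 : B ≤ (⌈B⌉₊ : ℝ) := Nat.le_ceil B
    have h2 : ((⌈B⌉₊ + 1 : ℕ) : ℝ) ≤ (n : ℝ) := by exact_mod_cast hnB'
    push_cast at h2
    linarith
  have hlog : max 1 (2 / (l - 1)) ≤ Real.log n := by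
    rw [← Real.log_exp (max 1 (2 / (l - 1)))]
    exact Real.log_le_log (Real.exp_pos _) hnB.le
  have hlog1 : 1 ≤ Real.log n := le_trans (le_max_left _ _) hlog
  have hlog2 : 2 / (l - 1) ≤ Real.log n := le_trans (le_max_right _ _) hlog
  have hlog2' : 2 ≤ (l - 1) * Real.log n := by
    have := (div_le_iff₀ hl1).mp hlog2
    nlinarith
  set m := ⌊(n : ℝ) ^ l⌋₊ with hmdef
  have hnl_pos : (0:ℝ) < (n : ℝ) ^ l := Real.rpow_pos_of_pos hnpos l
  have hml : (m : ℝ) ≤ (n : ℝ) ^ l := Nat.floor_le hnl_pos.le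
  have hlm : (n : ℝ) ^ l < (m : ℝ) + 1 := Nat.lt_floor_add_one _
  -- n < m
  have hpow_split : (n : ℝ) ^ l = (n : ℝ) ^ (l - 1) * (n : ℝ) := by
    have h := Real.rpow_add hnpos (l - 1) 1
    rw [Real.rpow_one, sub_add_cancel] at h
    exact h
  have hpow2 : (2:ℝ) ≤ (n : ℝ) ^ (l - 1) := by
    rw [Real.rpow_def_of_pos hnpos]
    calc (2:ℝ) ≤ Real.exp 2 - 1 := by nlinarith [Real.add_one_le_exp (2:ℝ)]
      _ ≤ Real.exp 2 := by linarith
      _ ≤ Real.exp ((l - 1) * Real.log n) := Real.exp_le_exp.mpr hlog2'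
      _ = Real.exp (Real.log n * (l - 1)) := by ring_nf
  have hnm : n < m := by
    have : ((n + 1 : ℕ) : ℝ) ≤ (n : ℝ) ^ l := by
      push_cast
      have hn1' : (1:ℝ) ≤ n := by exact_mod_cast hn1
      nlinarith [mul_le_mul_of_nonneg_right hpow2 hnpos.le]
    have := Nat.le_floor this
    omega
  -- log bounds
  have hmpos : (0:ℝ) < m := lt_of_lt_of_le hnpos (by exact_mod_cast hnm.le)
  have hlogm_ub : Real.log m ≤ l * Real.log n := by
    calc Real.log m ≤ Real.log ((n : ℝ) ^ l) := Real.log_le_log hmpos hml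
      _ = l * Real.log n := Real.log_rpow hnpos l
  have hlogm_lb : l * Real.log n ≤ Real.log ((m : ℝ) + 1) := by
    rw [← Real.log_rpow hnpos l]
    exact Real.log_le_log hnl_pos hlm.le
  -- L bounds
  have hLm_lb : l * Real.log n ≤ L m := by
    rw [hLdef]; exact le_trans hlogm_lb (ell_lower m)
  have hLm_ub : L m ≤ 1 + l * Real.log n := by
    rw [hLdef]; exact le_trans (ell_upper m) (by linarith)
  have hLn_ub : L n ≤ 1 + Real.log n := by rw [hLdef]; exact ell_upper n
  have hLn_lb : Real.log ((n : ℝ) + 1) ≤ L n := by rw [hLdef]; exact ell_lower n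
  have hLn_pos : 0 < L n := lt_of_lt_of_le (Real.log_pos (by linarith)) hLn_lb
  have hLm_pos : 0 < L m := lt_of_lt_of_le (by nlinarith) hLm_lb
  have hD : (l - 1) / 2 * Real.log n ≤ L m - L n := by nlinarith
  have hDpos : 0 < L m - L n := lt_of_lt_of_le (by nlinarith) hD
  have hsum_ub : L m + L n ≤ 4 * l * Real.log n := by nlinarith
  -- partial sums
  have hIoc : ∀ j : ℕ, Finset.Icc 1 j = Finset.Ioc 0 j := fun j => Finset.Icc_add_one_left_eq_Ioc 0 j
  have hS : ∀ j : ℕ, 0 < L j →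
      (∑ k ∈ Finset.Icc 1 j, s k / (k : ℂ)) = ((L j : ℝ) : ℂ) * T j := by
    intro j hj
    have hne : ((L j : ℝ) : ℂ) ≠ 0 := by
      simp only [ne_eq, Complex.ofReal_eq_zero]
      exact hj.ne'
    rw [hTdef, ← mul_assoc, mul_inv_cancel₀ hne, one_mul]
  have hSm := hS m hLm_pos
  have hSn := hS n hLn_pos
  have hSdiff : ∑ k ∈ Finset.Ioc n m, s k / (k : ℂ)
      = (∑ k ∈ Finset.Icc 1 m, s k / (k : ℂ)) - ∑ k ∈ Finset.Icc 1 n, s k / (k : ℂ) := by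
    rw [hIoc, hIoc, ← Finset.sum_Ioc_consecutive _ (Nat.zero_le n) hnm.le]
    ring
  have hLdiff : ∑ k ∈ Finset.Ioc n m, (1:ℝ) / k = L m - L n := by
    rw [hLdef, hLdef, hIoc, hIoc, ← Finset.sum_Ioc_consecutive _ (Nat.zero_le n) hnm.le]
    ring
  have hLdiffC : ((L m - L n : ℝ) : ℂ) = ∑ k ∈ Finset.Ioc n m, (1:ℂ) / (k : ℂ) := by
    rw [← hLdiff]
    push_cast
    rfl
  -- main identity
  have hid : (s n - A) * ((L m - L n : ℝ) : ℂ)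
      = ((L m : ℝ) : ℂ) * (T m - A) - ((L n : ℝ) : ℂ) * (T n - A)
        - ∑ k ∈ Finset.Ioc n m, (s k - s n) / (k : ℂ) := by
    have hexp : ∑ k ∈ Finset.Ioc n m, (s k - s n) / (k : ℂ)
        = (∑ k ∈ Finset.Ioc n m, s k / (k : ℂ)) - s n * ((L m - L n : ℝ) : ℂ) := by
      rw [hLdiffC, Finset.mul_sum, ← Finset.sum_sub_distrib]
      exact Finset.sum_congr rfl fun k _ => by ring
    rw [hexp, hSdiff, hSm, hSn]
    push_cast
    ring
  -- oscillation bound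
  have hosc' : ∀ k ∈ Finset.Ioc n m, ‖s k - s n‖ ≤ ε / 4 := by
    intro k hk
    obtain ⟨hk1, hk2⟩ := Finset.mem_Ioc.mp hk
    refine hosc n k hn0 hk1 ?_
    calc (k : ℝ) ≤ (m : ℝ) := by exact_mod_cast hk2
      _ ≤ (n : ℝ) ^ l := hml
  have hnorm_sum : ‖∑ k ∈ Finset.Ioc n m, (s k - s n) / (k : ℂ)‖ ≤ ε / 4 * (L m - L n) := by
    calc ‖∑ k ∈ Finset.Ioc n m, (s k - s n) / (k : ℂ)‖
        ≤ ∑ k ∈ Finset.Ioc n m, ‖(s k - s n) / (k : ℂ)‖ := norm_sum_le _ _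
      _ ≤ ∑ k ∈ Finset.Ioc n m, ε / 4 * ((1:ℝ) / k) := by
          refine Finset.sum_le_sum fun k hk => ?_
          obtain ⟨hk1, hk2⟩ := Finset.mem_Ioc.mp hk
          have hkpos : (0:ℝ) < k := by
            exact_mod_cast Nat.lt_of_le_of_lt (Nat.zero_le n) hk1
          rw [norm_div, Complex.norm_natCast]
          rw [show ε / 4 * ((1:ℝ) / k) = (ε / 4) / (k : ℝ) by ring]
          gcongr
          exact hosc' k hk
      _ = ε / 4 * (L m - L n) := by rw [← Finset.mul_sum, hLdiff]
  -- Cesàro-type bounds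
  have hTm : ‖T m - A‖ ≤ δ := by
    have := hN₁ m (le_trans hnN1 hnm.le)
    rw [dist_eq_norm] at this
    exact this.le
  have hTn : ‖T n - A‖ ≤ δ := by
    have := hN₁ n hnN1
    rw [dist_eq_norm] at this
    exact this.le
  -- combine
  have hmain : ‖s n - A‖ * (L m - L n) ≤ (L m + L n) * δ + ε / 4 * (L m - L n) := by
    have e1 : ‖s n - A‖ * (L m - L n) = ‖(s n - A) * ((L m - L n : ℝ) : ℂ)‖ := by
      rw [norm_mul, Complex.norm_real, Real.norm_eq_abs, abs_of_pos hDpos]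
    rw [e1, hid]
    calc ‖((L m : ℝ) : ℂ) * (T m - A) - ((L n : ℝ) : ℂ) * (T n - A)
          - ∑ k ∈ Finset.Ioc n m, (s k - s n) / (k : ℂ)‖
        ≤ ‖((L m : ℝ) : ℂ) * (T m - A) - ((L n : ℝ) : ℂ) * (T n - A)‖
            + ‖∑ k ∈ Finset.Ioc n m, (s k - s n) / (k : ℂ)‖ := norm_sub_le _ _
      _ ≤ (‖((L m : ℝ) : ℂ) * (T m - A)‖ + ‖((L n : ℝ) : ℂ) * (T n - A)‖)
            + ‖∑ k ∈ Finset.Ioc n m, (s k - s n) / (k : ℂ)‖ := by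
          gcongr
          exact norm_sub_le _ _
      _ ≤ (L m * δ + L n * δ) + ε / 4 * (L m - L n) := by
          refine add_le_add (add_le_add ?_ ?_) hnorm_sum
          · rw [norm_mul, Complex.norm_real, Real.norm_eq_abs, abs_of_pos hLm_pos]
            exact mul_le_mul_of_nonneg_left hTm hLm_pos.le
          · rw [norm_mul, Complex.norm_real, Real.norm_eq_abs, abs_of_pos hLn_pos]
            exact mul_le_mul_of_nonneg_left hTn hLn_pos.le
      _ = (L m + L n) * δ + ε / 4 * (L m - L n) := by ring
  have hδbound : (L m + L n) * δ ≤ ε / 4 * (L m - L n) := by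
    have h1 : (L m + L n) * δ ≤ (4 * l * Real.log n) * δ :=
      mul_le_mul_of_nonneg_right hsum_ub hδ.le
    have h2 : (4 * l * Real.log n) * δ = ε / 4 * ((l - 1) / 2 * Real.log n) := by
      rw [hδdef]
      field_simp
      ring
    have h3 : ε / 4 * ((l - 1) / 2 * Real.log n) ≤ ε / 4 * (L m - L n) :=
      mul_le_mul_of_nonneg_left hD (by positivity)
    linarith
  have hfinal : ‖s n - A‖ * (L m - L n) < ε * (L m - L n) := by
    have : ε / 2 * (L m - L n) < ε * (L m - L n) := by nlinarith
    linarith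
  rw [dist_eq_norm]
  exact lt_of_mul_lt_mul_right (by linarith) hDpos.le |>.trans_le le_rfl
    |>.trans_le le_rfl
  

theorem corollary4
    (s : ℕ → ℂ) (A : ℂ)
    (hso : ∀ ε > (0:ℝ), ∃ n₀ : ℕ, 1 < n₀ ∧ ∃ l > (1:ℝ),
      ∀ n k : ℕ, n₀ ≤ n → n < k → (k : ℝ) ≤ (n : ℝ) ^ l → ‖s k - s n‖ ≤ ε)
    (hL1 : Tendsto (fun n : ℕ =>
        (((∑ k ∈ Finset.Icc 1 n, (1:ℝ) / k) : ℝ) : ℂ)⁻¹ *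
          ∑ k ∈ Finset.Icc 1 n, s k / (k : ℂ))
      atTop (nhds A)) :
    Tendsto s atTop (nhds A) := by
  exact corollary4_aux s A _ _ (fun n => rfl) (fun n => rfl) hso hL1
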